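/- ACD supremum formula for α > 1 (finite case): for a probability mass function θ on a finite set S and any g : S → ℝ, (1/α) log ∑_x e^{α g(x)} θ(x) equals the supremum over probability mass functions ν with ν ⪯ θ of ((1/(α−1)) log ∑_x e^{(α−1) g(x)} ν(x) − R_α(ν‖θ)). -/

import Mathlib

open Finset Real
open Classical

/-- ACD supremum formula for α > 1 (finite case): (1/α) log ∑ e^{αg} θ is the
supremum (attained) over pmfs ν ⪯ θ of
(1/(α-1)) log ∑ e^{(α-1)g} ν - R_α(ν‖θ). -/
theorem acd_sup_formula_big_alpha {S : Type} [Fintype S] [Nonempty S]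
    (θ : S → ℝ) (g : S → ℝ) (α : ℝ) (hα : 1 < α)
    (hθ0 : ∀ x, 0 ≤ θ x) (hθ1 : ∑ x, θ x = 1) :
    IsGreatest
      {v : ℝ | ∃ ν : S → ℝ, (∀ x, 0 ≤ ν x) ∧ (∑ x, ν x = 1) ∧
        (∀ x, θ x = 0 → ν x = 0) ∧
        v = (1 / (α - 1)) * Real.log (∑ x, Real.exp ((α - 1) * g x) * ν x) -
            (1 / (α * (α - 1))) *
              Real.log (∑ x ∈ Finset.univ.filter (fun x => 0 < ν x * θ x),
                ν x ^ α * θ x ^ (1 - α))}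
      ((1 / α) * Real.log (∑ x, Real.exp (α * g x) * θ x)) := by
  have hα0 : (0:ℝ) < α := lt_trans one_pos hα
  have hα1 : (0:ℝ) < α - 1 := sub_pos.mpr hα
  obtain ⟨x₀, hx₀⟩ : ∃ x, 0 < θ x := by
    by_contra h
    push_neg at h
    have hz : ∑ x, θ x = 0 :=
      Finset.sum_eq_zero fun x _ => le_antisymm (h x) (hθ0 x)
    rw [hz] at hθ1; norm_num at hθ1
  set Z := ∑ x, Real.exp (α * g x) * θ x with hZ
  have hZpos : 0 < Z :=
    Finset.sum_pos' (fun y _ => mul_nonneg (Real.exp_pos _).le (hθ0 y))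
      ⟨x₀, Finset.mem_univ x₀, mul_pos (Real.exp_pos _) hx₀⟩
  constructor
  · -- membership: witness ν x = exp (g x) * θ x / W
    set W := ∑ x, Real.exp (g x) * θ x with hW
    have hWpos : 0 < W :=
      Finset.sum_pos' (fun y _ => mul_nonneg (Real.exp_pos _).le (hθ0 y))
        ⟨x₀, Finset.mem_univ x₀, mul_pos (Real.exp_pos _) hx₀⟩
    refine ⟨fun x => Real.exp (g x) * θ x / W, ?_, ?_, ?_, ?_⟩
    · intro x; exact div_nonneg (mul_nonneg (Real.exp_pos _).le (hθ0 x)) hWpos.le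
    · rw [← Finset.sum_div, ← hW, div_self hWpos.ne']
    · intro x hx; simp [hx]
    · have h1 : (∑ x, Real.exp ((α - 1) * g x) * (Real.exp (g x) * θ x / W)) = Z / W := by
        rw [hZ, Finset.sum_div]
        refine Finset.sum_congr rfl fun x _ => ?_
        have he : Real.exp ((α - 1) * g x) * Real.exp (g x) = Real.exp (α * g x) := by
          rw [← Real.exp_add]; ring_nf
        rw [← he]; ring
      have hfil : (Finset.univ.filter fun x => 0 < (Real.exp (g x) * θ x / W) * θ x)
          = Finset.univ.filter fun x => 0 < θ x := by
        refine Finset.filter_congr fun x _ => ?_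
        constructor
        · intro h
          rcases (hθ0 x).lt_or_eq with h' | h'
          · exact h'
          · exfalso; rw [← h'] at h; simp at h
        · intro h
          exact mul_pos (div_pos (mul_pos (Real.exp_pos _) h) hWpos) h
      have h2 : (∑ x ∈ Finset.univ.filter
            (fun x => 0 < (Real.exp (g x) * θ x / W) * θ x),
            (Real.exp (g x) * θ x / W) ^ α * θ x ^ (1 - α)) = Z / W ^ α := by
        rw [hfil]
        have hterm : ∀ x ∈ Finset.univ.filter fun x => 0 < θ x,
            (Real.exp (g x) * θ x / W) ^ α * θ x ^ (1 - α)
              = Real.exp (α * g x) * θ x / W ^ α := by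
          intro x hx
          have hθx : 0 < θ x := (Finset.mem_filter.mp hx).2
          rw [Real.div_rpow (mul_nonneg (Real.exp_pos _).le (hθ0 x)) hWpos.le,
            Real.mul_rpow (Real.exp_pos _).le (hθ0 x)]
          rw [← Real.exp_mul, mul_comm (g x) α]
          rw [div_mul_eq_mul_div, mul_assoc, ← Real.rpow_add hθx]
          norm_num
        rw [Finset.sum_congr rfl hterm, ← Finset.sum_div]
        congr 1
        rw [hZ]
        exact Finset.sum_filter_of_ne fun x _ hne => by
          rcases (hθ0 x).lt_or_eq with h' | h'
          · exact h'
          · exfalso; exact hne (by rw [← h', mul_zero])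
      rw [h1, h2, Real.log_div hZpos.ne' hWpos.ne',
        Real.log_div hZpos.ne' (Real.rpow_pos_of_pos hWpos α).ne',
        Real.log_rpow hWpos]
      field_simp
      ring
  · -- upper bound
    rintro v ⟨ν, hν0, hν1, hac, rfl⟩
    set T := Finset.univ.filter (fun x => 0 < ν x * θ x) with hT
    have hmemT : ∀ x, x ∈ T ↔ 0 < ν x := by
      intro x
      rw [hT, Finset.mem_filter]
      constructor
      · rintro ⟨-, h⟩
        rcases (hν0 x).lt_or_eq with h' | h'
        · exact h'
        · exfalso; rw [← h'] at h; simp at h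
      · intro h
        have hθx : 0 < θ x := by
          rcases (hθ0 x).lt_or_eq with h' | h'
          · exact h'
          · exact absurd (hac x h'.symm) (ne_of_gt h)
        exact ⟨Finset.mem_univ x, mul_pos h hθx⟩
    have hθT : ∀ x ∈ T, 0 < θ x := by
      intro x hx
      rcases (hθ0 x).lt_or_eq with h' | h'
      · exact h'
      · exact absurd (hac x h'.symm) (ne_of_gt ((hmemT x).mp hx))
    obtain ⟨y₀, hy₀⟩ : ∃ y, 0 < ν y := by
      by_contra h
      push_neg at h
      have hz : ∑ x, ν x = 0 :=
        Finset.sum_eq_zero fun x _ => le_antisymm (h x) (hν0 x)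
      rw [hz] at hν1; norm_num at hν1
    have hy₀T : y₀ ∈ T := (hmemT y₀).mpr hy₀
    set A := ∑ x, Real.exp ((α - 1) * g x) * ν x with hA
    set B := ∑ x ∈ T, ν x ^ α * θ x ^ (1 - α) with hB
    have hApos : 0 < A :=
      Finset.sum_pos' (fun y _ => mul_nonneg (Real.exp_pos _).le (hν0 y))
        ⟨y₀, Finset.mem_univ y₀, mul_pos (Real.exp_pos _) hy₀⟩
    have hBpos : 0 < B := by
      refine Finset.sum_pos (fun x hx => ?_) ⟨y₀, hy₀T⟩
      exact mul_pos (Real.rpow_pos_of_pos ((hmemT x).mp hx) _)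
        (Real.rpow_pos_of_pos (hθT x hx) _)
    have hA' : A = ∑ x ∈ T, Real.exp ((α - 1) * g x) * ν x := by
      rw [hA, hT]
      refine (Finset.sum_filter_of_ne fun x _ hne => ?_).symm
      have hνx : 0 < ν x := by
        rcases (hν0 x).lt_or_eq with h' | h'
        · exact h'
        · exfalso; exact hne (by rw [← h', mul_zero])
      have hθx : 0 < θ x := by
        rcases (hθ0 x).lt_or_eq with h' | h'
        · exact h'
        · exact absurd (hac x h'.symm) (ne_of_gt hνx)
      exact mul_pos hνx hθx
    have hpq : Real.HolderConjugate (α / (α - 1)) α :=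
      Real.holderConjugate_iff.mpr ⟨(one_lt_div hα1).mpr (by linarith), by field_simp; ring⟩
    -- Hölder inequality
    have holder := Real.inner_le_Lp_mul_Lq_of_nonneg (s := T) hpq
      (f := fun x => Real.exp ((α - 1) * g x) * θ x ^ ((α - 1) / α))
      (g := fun x => ν x * θ x ^ ((1 - α) / α))
      (fun x _ => mul_nonneg (Real.exp_pos _).le (Real.rpow_nonneg (hθ0 x) _))
      (fun x _ => mul_nonneg (hν0 x) (Real.rpow_nonneg (hθ0 x) _))
    have hfg : ∀ x ∈ T, (Real.exp ((α - 1) * g x) * θ x ^ ((α - 1) / α)) *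
        (ν x * θ x ^ ((1 - α) / α)) = Real.exp ((α - 1) * g x) * ν x := by
      intro x hx
      have hθx := hθT x hx
      have : θ x ^ ((α - 1) / α) * θ x ^ ((1 - α) / α) = 1 := by
        rw [← Real.rpow_add hθx]
        have : (α - 1) / α + (1 - α) / α = 0 := by field_simp; ring
        rw [this, Real.rpow_zero]
      calc (Real.exp ((α - 1) * g x) * θ x ^ ((α - 1) / α)) *
            (ν x * θ x ^ ((1 - α) / α))
          = Real.exp ((α - 1) * g x) * ν x *
            (θ x ^ ((α - 1) / α) * θ x ^ ((1 - α) / α)) := by ring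
        _ = Real.exp ((α - 1) * g x) * ν x := by rw [this, mul_one]
    have hfp : ∀ x ∈ T, (Real.exp ((α - 1) * g x) * θ x ^ ((α - 1) / α)) ^ (α / (α - 1))
        = Real.exp (α * g x) * θ x := by
      intro x hx
      rw [Real.mul_rpow (Real.exp_pos _).le (Real.rpow_nonneg (hθ0 x) _),
        ← Real.exp_mul, ← Real.rpow_mul (hθ0 x),
        show (α - 1) / α * (α / (α - 1)) = 1 by field_simp, Real.rpow_one]
      congr 2
      field_simp
    have hgq : ∀ x ∈ T, (ν x * θ x ^ ((1 - α) / α)) ^ α = ν x ^ α * θ x ^ (1 - α) := by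
      intro x hx
      rw [Real.mul_rpow (hν0 x) (Real.rpow_nonneg (hθ0 x) _),
        ← Real.rpow_mul (hθ0 x), show (1 - α) / α * α = 1 - α by field_simp]
    rw [Finset.sum_congr rfl hfg, Finset.sum_congr rfl hfp,
      Finset.sum_congr rfl hgq, ← hA', ← hB] at holder
    have hsub : (∑ x ∈ T, Real.exp (α * g x) * θ x) ≤ Z := by
      rw [hZ]
      exact Finset.sum_le_sum_of_subset_of_nonneg (Finset.subset_univ T)
        (fun x _ _ => mul_nonneg (Real.exp_pos _).le (hθ0 x))
    have hZT : 0 < ∑ x ∈ T, Real.exp (α * g x) * θ x :=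
      Finset.sum_pos (fun x hx => mul_pos (Real.exp_pos _) (hθT x hx)) ⟨y₀, hy₀T⟩
    have holder2 : A ≤ Z ^ (1 / (α / (α - 1))) * B ^ (1 / α) := by
      refine holder.trans ?_
      gcongr
    have hlog : Real.log A ≤ (1 / (α / (α - 1))) * Real.log Z + (1 / α) * Real.log B := by
      have := Real.log_le_log hApos holder2
      rwa [Real.log_mul (Real.rpow_pos_of_pos hZpos _).ne'
        (Real.rpow_pos_of_pos hBpos _).ne',
        Real.log_rpow hZpos, Real.log_rpow hBpos] at this
    have hrw : (1 / (α / (α - 1))) = (α - 1) / α := by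
      rw [one_div_div]
    rw [hrw] at hlog
    have key : (1 / (α - 1)) * ((α - 1) / α * Real.log Z + 1 / α * Real.log B)
        - (1 / (α * (α - 1))) * Real.log B = (1 / α) * Real.log Z := by
      field_simp
      ring
    have hmono := mul_le_mul_of_nonneg_left hlog
      (le_of_lt (by positivity : (0:ℝ) < 1 / (α - 1)))
    linarith
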